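/- An element a of a general ring I is quasipolar if and only if there exists b ∈ comm²(a) with ab² = b and a²b - a ∈ QN(I). Moreover, such b is unique when it exists. -/

import Mathlib

variable {I : Type*} [NonUnitalRing I]

/-- quasiregular elements: p * q = 0 = q * p with p*q = p+q-pq -/
def inQ (a : I) : Prop := ∃ p : I, p + a - p * a = 0 ∧ a + p - a * p = 0

def inQN (a : I) : Prop := ∀ x : I, a * x = x * a → inQ (a * x)

def inComm2 (a x : I) : Prop := ∀ y : I, y * a = a * y → x * y = y * x

def IsQuasipolarElem (a : I) : Prop :=
  ∃ p : I, p * p = p ∧ inComm2 a p ∧ inQ (a + p) ∧ inQN (a - a * p)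

/-- pw a n = a^(n+1) -/
def pw (a : I) : ℕ → I
  | 0 => a
  | n + 1 => pw a n * a

def IsSPiReg (a : I) : Prop := ∃ n : ℕ, ∃ x : I, a * x = x * a ∧ pw a n = pw a (n + 1) * x

def IsNilp (a : I) : Prop := ∃ n : ℕ, pw a n = 0

def IsStrReg (a : I) : Prop := ∃ b : I, a * b = b * a ∧ a = a * b * a

open Unitization

private lemma commute_of_inv {M : Type*} [Monoid M] {x u h : M}
    (hxu : x * u = u * x) (h1 : u * h = 1) (h2 : h * u = 1) : x * h = h * x := by
  calc x * h = h * u * (x * h) := by rw [h2, one_mul]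
    _ = h * (u * x) * h := by simp only [mul_assoc]
    _ = h * (x * u) * h := by rw [hxu]
    _ = h * x * (u * h) := by simp only [mul_assoc]
    _ = h * x := by rw [h1, mul_one]

private lemma isUnit_left_of_commute {M : Type*} [Monoid M] {x y : M}
    (h : IsUnit (x * y)) (hc : x * y = y * x) : IsUnit x := by
  obtain ⟨u, hu⟩ := h
  have hxu : x * ↑u = ↑u * x := by rw [hu, mul_assoc, hc]
  refine isUnit_iff_exists.mpr ⟨y * ↑u⁻¹, ?_, ?_⟩
  · calc x * (y * ↑u⁻¹) = (x * y) * ↑u⁻¹ := (mul_assoc _ _ _).symm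
      _ = ↑u * ↑u⁻¹ := by rw [hu]
      _ = 1 := u.mul_inv
  · have hxui : x * ↑u⁻¹ = ↑u⁻¹ * x := commute_of_inv hxu u.mul_inv u.inv_mul
    calc (y * ↑u⁻¹) * x = y * (↑u⁻¹ * x) := mul_assoc _ _ _
      _ = y * (x * ↑u⁻¹) := by rw [hxui]
      _ = (y * x) * ↑u⁻¹ := (mul_assoc _ _ _).symm
      _ = (x * y) * ↑u⁻¹ := by rw [hc]
      _ = ↑u * ↑u⁻¹ := by rw [hu]
      _ = 1 := u.mul_inv

lemma inQ_iff_isUnit (a : I) : inQ a ↔ IsUnit (1 - (a : Unitization ℤ I)) := by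
  constructor
  · rintro ⟨p, h1, h2⟩
    refine isUnit_iff_exists.mpr ⟨1 - (p : Unitization ℤ I), ?_, ?_⟩
    · have e : (1 - (a : Unitization ℤ I)) * (1 - (p : Unitization ℤ I))
          = 1 - ((a : Unitization ℤ I) + p - a * p) := by noncomm_ring
      rw [e, ← inr_mul, ← inr_add, ← inr_sub, h2, inr_zero, sub_zero]
    · have e : (1 - (p : Unitization ℤ I)) * (1 - (a : Unitization ℤ I))
          = 1 - ((p : Unitization ℤ I) + a - p * a) := by noncomm_ring
      rw [e, ← inr_mul, ← inr_add, ← inr_sub, h1, inr_zero, sub_zero]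
  · rintro ⟨u, hu⟩
    have hfst : (↑u⁻¹ : Unitization ℤ I).fst = 1 := by
      have h1 : ((↑u * ↑u⁻¹ : Unitization ℤ I)).fst = 1 := by rw [u.mul_inv]; exact fst_one
      have e1 : ((1 : Unitization ℤ I) - ↑a).fst = 1 := by
        simp [sub_eq_add_neg, fst_add, fst_neg, fst_inr, fst_one]
      rw [fst_mul, hu, e1, one_mul] at h1
      exact h1
    have hw : (↑u⁻¹ : Unitization ℤ I) = 1 - ((-(↑u⁻¹ : Unitization ℤ I).snd : I) : Unitization ℤ I) := by
      rw [inr_neg, sub_neg_eq_add]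
      conv_lhs => rw [← inl_fst_add_inr_snd_eq (↑u⁻¹ : Unitization ℤ I)]
      rw [hfst, inl_one]
    refine ⟨-(↑u⁻¹ : Unitization ℤ I).snd, ?_, ?_⟩
    · have h1 : (↑u⁻¹ * ↑u : Unitization ℤ I) = 1 := u.inv_mul
      rw [hw, hu] at h1
      have e : (1 - ((-(↑u⁻¹ : Unitization ℤ I).snd : I) : Unitization ℤ I)) * (1 - (a : Unitization ℤ I))
          = 1 - (((-(↑u⁻¹ : Unitization ℤ I).snd : I) : Unitization ℤ I) + a
              - ((-(↑u⁻¹ : Unitization ℤ I).snd : I) : Unitization ℤ I) * a) := by noncomm_ring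
      rw [e, ← inr_mul, ← inr_add, ← inr_sub] at h1
      have h2 := sub_eq_self.mp h1
      exact inr_injective (h2.trans (inr_zero ℤ).symm)
    · have h1 : (↑u * ↑u⁻¹ : Unitization ℤ I) = 1 := u.mul_inv
      rw [hw, hu] at h1
      have e : (1 - (a : Unitization ℤ I)) * (1 - ((-(↑u⁻¹ : Unitization ℤ I).snd : I) : Unitization ℤ I))
          = 1 - ((a : Unitization ℤ I) + ((-(↑u⁻¹ : Unitization ℤ I).snd : I) : Unitization ℤ I)
              - (a : Unitization ℤ I) * ((-(↑u⁻¹ : Unitization ℤ I).snd : I) : Unitization ℤ I)) := by noncomm_ring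
      rw [e, ← inr_mul, ← inr_add, ← inr_sub] at h1
      have h2 := sub_eq_self.mp h1
      exact inr_injective (h2.trans (inr_zero ℤ).symm)

private lemma inQN_neg {a : I} (h : inQN a) : inQN (-a) := by
  intro x hx
  have hax : a * x = x * a := by
    rw [neg_mul, mul_neg] at hx
    exact neg_inj.mp hx
  have h2 := h (-x) (by rw [mul_neg, neg_mul, hax])
  have e : (-a) * x = a * (-x) := by rw [neg_mul, mul_neg]
  rw [e]
  exact h2

private lemma inQN_isUnit {q : I} (h : inQN q) : IsUnit (1 - (q : Unitization ℤ I)) := by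
  have h2 : inQ (q * q) := h q rfl
  rw [inQ_iff_isUnit, inr_mul] at h2
  have e : (1 : Unitization ℤ I) - ↑q * ↑q = (1 - ↑q) * (1 + ↑q) := by noncomm_ring
  rw [e] at h2
  exact isUnit_left_of_commute h2 (by noncomm_ring)

private lemma inQ_idem_eq_zero {g : I} (h : inQ g) (hg : g * g = g) : g = 0 := by
  obtain ⟨w, -, h2⟩ := h
  have h3 : g * (g + w - g * w) = 0 := by rw [h2, mul_zero]
  rw [mul_sub, mul_add, ← mul_assoc, hg] at h3
  simpa using h3

private lemma closure_comm3 {R : Type*} [Ring R] {a b c : R} (hab : a * b = b * a)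
    (hac : a * c = c * a) (hbc : b * c = c * b) :
    ∀ x ∈ ({a, b, c} : Set R), ∀ y ∈ ({a, b, c} : Set R), x * y = y * x := by
  rintro x (rfl | rfl | rfl) y (rfl | rfl | rfl) <;>
    first | rfl | assumption | exact hab.symm | exact hac.symm | exact hbc.symm

private lemma closure_comm2 {R : Type*} [Ring R] {a b : R} (hab : a * b = b * a) :
    ∀ x ∈ ({a, b} : Set R), ∀ y ∈ ({a, b} : Set R), x * y = y * x := by
  rintro x (rfl | rfl) y (rfl | rfl) <;> first | rfl | assumption | exact hab.symm

private lemma uniq_calc1 {R : Type*} [Ring R] {a b c : R} (hab : a * b = b * a)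
    (hac : a * c = c * a) (hbc : b * c = c * b) (hb : a * (b * b) = b) (hc : a * (c * c) = c) :
    (a - a*a*c) * (b - a*b*c) = (b - a*b*c) * (a - a*a*c) ∧
    (a - a*a*c) * (b - a*b*c) = a*b - a*a*b*c ∧
    (a*b - a*a*b*c) * (a*b - a*a*b*c) = a*b - a*a*b*c := by
  letI : CommRing (Subring.closure ({a, b, c} : Set R)) :=
    Subring.closureCommRingOfComm (closure_comm3 hab hac hbc)
  have ha' : a ∈ Subring.closure ({a, b, c} : Set R) := Subring.subset_closure (by left; rfl)
  have hb'' : b ∈ Subring.closure ({a, b, c} : Set R) := Subring.subset_closure (by right; left; rfl)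
  have hc'' : c ∈ Subring.closure ({a, b, c} : Set R) := Subring.subset_closure (by right; right; rfl)
  set A : Subring.closure ({a, b, c} : Set R) := ⟨a, ha'⟩
  set B : Subring.closure ({a, b, c} : Set R) := ⟨b, hb''⟩
  set C : Subring.closure ({a, b, c} : Set R) := ⟨c, hc''⟩
  have hbS : A * (B * B) = B := Subtype.ext hb
  have hcS : A * (C * C) = C := Subtype.ext hc
  have k1 : (A - A*A*C) * (B - A*B*C) = (B - A*B*C) * (A - A*A*C) := mul_comm _ _
  have k2 : (A - A*A*C) * (B - A*B*C) = A*B - A*A*B*C := by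
    linear_combination (A*A*B) * hcS
  have k3 : (A*B - A*A*B*C) * (A*B - A*A*B*C) = A*B - A*A*B*C := by
    linear_combination (A - A*A*C) * hbS + (A*A*A*B*B) * hcS
  exact ⟨congrArg Subtype.val k1, congrArg Subtype.val k2, congrArg Subtype.val k3⟩

private lemma uniq_calc2 {R : Type*} [Ring R] {a b c : R} (hab : a * b = b * a)
    (hac : a * c = c * a) (hbc : b * c = c * b) (hb : a * (b * b) = b) (hc : a * (c * c) = c)
    (hg : a*b - a*a*b*c = 0) (hg2 : a*c - a*a*c*b = 0) : b = c := by
  letI : CommRing (Subring.closure ({a, b, c} : Set R)) :=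
    Subring.closureCommRingOfComm (closure_comm3 hab hac hbc)
  have ha' : a ∈ Subring.closure ({a, b, c} : Set R) := Subring.subset_closure (by left; rfl)
  have hb'' : b ∈ Subring.closure ({a, b, c} : Set R) := Subring.subset_closure (by right; left; rfl)
  have hc'' : c ∈ Subring.closure ({a, b, c} : Set R) := Subring.subset_closure (by right; right; rfl)
  set A : Subring.closure ({a, b, c} : Set R) := ⟨a, ha'⟩
  set B : Subring.closure ({a, b, c} : Set R) := ⟨b, hb''⟩
  set C : Subring.closure ({a, b, c} : Set R) := ⟨c, hc''⟩
  have hbS : A * (B * B) = B := Subtype.ext hb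
  have hcS : A * (C * C) = C := Subtype.ext hc
  have hgS : A*B - A*A*B*C = 0 := Subtype.ext hg
  have hg2S : A*C - A*A*C*B = 0 := Subtype.ext hg2
  have key : B = C := by
    linear_combination (-1 : Subring.closure ({a, b, c} : Set R)) * hbS + hcS
      + (B + C) * hgS - (B + C) * hg2S
  exact congrArg Subtype.val key

private lemma fwd_calc {R : Type*} [Ring R] {a p h : R} (hap : a * p = p * a)
    (hah : a * h = h * a) (hph : p * h = h * p) (hp : p * p = p)
    (hU : (1 - a - p) * h = 1) :
    a * ((h*p) * (h*p)) = -(h*p) ∧ a * (h*p) = -p := by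
  letI : CommRing (Subring.closure ({a, p, h} : Set R)) :=
    Subring.closureCommRingOfComm (closure_comm3 hap hah hph)
  have ha' : a ∈ Subring.closure ({a, p, h} : Set R) := Subring.subset_closure (by left; rfl)
  have hp'' : p ∈ Subring.closure ({a, p, h} : Set R) := Subring.subset_closure (by right; left; rfl)
  have hh'' : h ∈ Subring.closure ({a, p, h} : Set R) := Subring.subset_closure (by right; right; rfl)
  set A : Subring.closure ({a, p, h} : Set R) := ⟨a, ha'⟩
  set P : Subring.closure ({a, p, h} : Set R) := ⟨p, hp''⟩
  set H : Subring.closure ({a, p, h} : Set R) := ⟨h, hh''⟩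
  have hpS : P * P = P := Subtype.ext hp
  have hUS : (1 - A - P) * H = 1 := Subtype.ext hU
  have k1 : A * ((H*P) * (H*P)) = -(H*P) := by
    linear_combination (-H - H*H*P) * hpS + (-(H*P*P)) * hUS
  have k2 : A * (H*P) = -P := by
    linear_combination (-H) * hpS + (-P) * hUS
  exact ⟨congrArg Subtype.val k1, congrArg Subtype.val k2⟩

private lemma bwd_comm {R : Type*} [Ring R] {a b : R} (hab : a * b = b * a) :
    a * (1 - (a - a*a*b)) = (1 - (a - a*a*b)) * a ∧
    b * (1 - (a - a*a*b)) = (1 - (a - a*a*b)) * b := by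
  letI : CommRing (Subring.closure ({a, b} : Set R)) :=
    Subring.closureCommRingOfComm (closure_comm2 hab)
  have ha' : a ∈ Subring.closure ({a, b} : Set R) := Subring.subset_closure (by left; rfl)
  have hb'' : b ∈ Subring.closure ({a, b} : Set R) := Subring.subset_closure (by right; rfl)
  set A : Subring.closure ({a, b} : Set R) := ⟨a, ha'⟩
  set B : Subring.closure ({a, b} : Set R) := ⟨b, hb''⟩
  exact ⟨congrArg Subtype.val (mul_comm A (1 - (A - A*A*B))),
    congrArg Subtype.val (mul_comm B (1 - (A - A*A*B)))⟩

private lemma bwd_main {R : Type*} [Ring R] {a b v : R} (hab : a * b = b * a)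
    (hav : a * v = v * a) (hbv : b * v = v * b) (hb : a * (b * b) = b)
    (hv : (1 - (a - a*a*b)) * v = 1) :
    (1 - (a + a*b)) * ((1 - a*b) * v * (1 - a*b) - b) = 1 ∧
    ((1 - a*b) * v * (1 - a*b) - b) * (1 - (a + a*b)) = 1 := by
  letI : CommRing (Subring.closure ({a, b, v} : Set R)) :=
    Subring.closureCommRingOfComm (closure_comm3 hab hav hbv)
  have ha' : a ∈ Subring.closure ({a, b, v} : Set R) := Subring.subset_closure (by left; rfl)
  have hb'' : b ∈ Subring.closure ({a, b, v} : Set R) := Subring.subset_closure (by right; left; rfl)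
  have hv'' : v ∈ Subring.closure ({a, b, v} : Set R) := Subring.subset_closure (by right; right; rfl)
  set A : Subring.closure ({a, b, v} : Set R) := ⟨a, ha'⟩
  set B : Subring.closure ({a, b, v} : Set R) := ⟨b, hb''⟩
  set V : Subring.closure ({a, b, v} : Set R) := ⟨v, hv''⟩
  have hbS : A * (B * B) = B := Subtype.ext hb
  have hvS : (1 - (A - A*A*B)) * V = 1 := Subtype.ext hv
  have k1 : (1 - (A + A*B)) * ((1 - A*B) * V * (1 - A*B) - B) = 1 := by
    linear_combination (1 + A + A*V*(1 - A*B) + A*A*V*(1 - A*B)) * hbS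
      + ((1 - A*B) + A*(A*(B*B) - B)) * hvS
  have k2 : ((1 - A*B) * V * (1 - A*B) - B) * (1 - (A + A*B)) = 1 := by
    linear_combination (1 + A + A*V*(1 - A*B) + A*A*V*(1 - A*B)) * hbS
      + ((1 - A*B) + A*(A*(B*B) - B)) * hvS
  exact ⟨congrArg Subtype.val k1, congrArg Subtype.val k2⟩

private lemma gd_unique {a b c : I} (hb1 : inComm2 a b) (hb2 : a * (b * b) = b)
    (hb3 : inQN (a*a*b - a)) (hc1 : inComm2 a c) (hc2 : a * (c * c) = c)
    (hc3 : inQN (a*a*c - a)) : b = c := by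
  have hab : a * b = b * a := (hb1 a rfl).symm
  have hac : a * c = c * a := (hc1 a rfl).symm
  have hbc : b * c = c * b := hb1 c (hc1 a rfl)
  have habR : (a : Unitization ℤ I) * b = (b : Unitization ℤ I) * a := by
    rw [← inr_mul, ← inr_mul, hab]
  have hacR : (a : Unitization ℤ I) * c = (c : Unitization ℤ I) * a := by
    rw [← inr_mul, ← inr_mul, hac]
  have hbcR : (b : Unitization ℤ I) * c = (c : Unitization ℤ I) * b := by
    rw [← inr_mul, ← inr_mul, hbc]
  have hb2R : (a : Unitization ℤ I) * ((b : Unitization ℤ I) * b) = (b : Unitization ℤ I) := by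
    rw [← inr_mul, ← inr_mul, hb2]
  have hc2R : (a : Unitization ℤ I) * ((c : Unitization ℤ I) * c) = (c : Unitization ℤ I) := by
    rw [← inr_mul, ← inr_mul, hc2]
  obtain ⟨u1a, u1b, u1c⟩ := uniq_calc1 (R := Unitization ℤ I) habR hacR hbcR hb2R hc2R
  obtain ⟨u2a, u2b, u2c⟩ := uniq_calc1 (R := Unitization ℤ I) hacR habR (hbcR.symm) hc2R hb2R
  -- transfer to I
  have e1 : (a - a*a*c) * (b - a*b*c) = (b - a*b*c) * (a - a*a*c) := by
    apply inr_injective (R := ℤ)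
    simpa only [inr_mul, inr_sub] using u1a
  have e2 : (a - a*a*c) * (b - a*b*c) = a*b - a*a*b*c := by
    apply inr_injective (R := ℤ)
    simpa only [inr_mul, inr_sub] using u1b
  have e3 : (a*b - a*a*b*c) * (a*b - a*a*b*c) = a*b - a*a*b*c := by
    apply inr_injective (R := ℤ)
    simpa only [inr_mul, inr_sub] using u1c
  have e1' : (a - a*a*b) * (c - a*c*b) = (c - a*c*b) * (a - a*a*b) := by
    apply inr_injective (R := ℤ)
    simpa only [inr_mul, inr_sub] using u2a
  have e2' : (a - a*a*b) * (c - a*c*b) = a*c - a*a*c*b := by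
    apply inr_injective (R := ℤ)
    simpa only [inr_mul, inr_sub] using u2b
  have e3' : (a*c - a*a*c*b) * (a*c - a*a*c*b) = a*c - a*a*c*b := by
    apply inr_injective (R := ℤ)
    simpa only [inr_mul, inr_sub] using u2c
  have hqQN : inQN (a - a*a*c) := by
    have := inQN_neg hc3; rwa [neg_sub] at this
  have hq2QN : inQN (a - a*a*b) := by
    have := inQN_neg hb3; rwa [neg_sub] at this
  have hg0 : a*b - a*a*b*c = 0 :=
    inQ_idem_eq_zero (e2 ▸ hqQN _ e1) e3
  have hg20 : a*c - a*a*c*b = 0 :=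
    inQ_idem_eq_zero (e2' ▸ hq2QN _ e1') e3'
  have hgR : (a : Unitization ℤ I)*b - (a : Unitization ℤ I)*a*b*c = 0 := by
    have : ((a*b - a*a*b*c : I) : Unitization ℤ I) = 0 := by rw [hg0, inr_zero]
    simpa only [inr_mul, inr_sub] using this
  have hg2R : (a : Unitization ℤ I)*c - (a : Unitization ℤ I)*a*c*b = 0 := by
    have : ((a*c - a*a*c*b : I) : Unitization ℤ I) = 0 := by rw [hg20, inr_zero]
    simpa only [inr_mul, inr_sub] using this
  exact inr_injective (R := ℤ) (uniq_calc2 (R := Unitization ℤ I) habR hacR hbcR hb2R hc2R hgR hg2R)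

theorem stmt5 (a : I) :
    IsQuasipolarElem a ↔
      ∃! b : I, inComm2 a b ∧ a * (b * b) = b ∧ inQN (a * a * b - a) := by
  constructor
  · rintro ⟨p, hp2, hpc, hQ, hQN⟩
    obtain ⟨s, hs1, hs2⟩ := hQ
    -- work in the unitization
    have key : ((a + p : I) : Unitization ℤ I) = (a : Unitization ℤ I) + p := inr_add _ _ _
    have hU1 : ((1 : Unitization ℤ I) - a - p) * (1 - (s : Unitization ℤ I)) = 1 := by
      have k : ((a + p : I) : Unitization ℤ I) + (s : Unitization ℤ I)
          - ((a + p : I) : Unitization ℤ I) * (s : Unitization ℤ I) = 0 := by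
        rw [← inr_mul, ← inr_add, ← inr_sub, hs2, inr_zero]
      have e2 : ((1 : Unitization ℤ I) - a - p) * (1 - (s : Unitization ℤ I))
          = 1 - (((a + p : I) : Unitization ℤ I) + (s : Unitization ℤ I)
              - ((a + p : I) : Unitization ℤ I) * (s : Unitization ℤ I)) := by
        rw [key]; noncomm_ring
      rw [e2, k, sub_zero]
    have hU2 : ((1 : Unitization ℤ I) - (s : Unitization ℤ I)) * (1 - (a : Unitization ℤ I) - p) = 1 := by
      have k : (s : Unitization ℤ I) + ((a + p : I) : Unitization ℤ I)
          - (s : Unitization ℤ I) * ((a + p : I) : Unitization ℤ I) = 0 := by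
        rw [← inr_mul, ← inr_add, ← inr_sub, hs1, inr_zero]
      have e2 : ((1 : Unitization ℤ I) - (s : Unitization ℤ I)) * (1 - (a : Unitization ℤ I) - p)
          = 1 - ((s : Unitization ℤ I) + ((a + p : I) : Unitization ℤ I)
              - (s : Unitization ℤ I) * ((a + p : I) : Unitization ℤ I)) := by
        rw [key]; noncomm_ring
      rw [e2, k, sub_zero]
    have hpa : p * a = a * p := hpc a rfl
    have hAP : (a : Unitization ℤ I) * p = (p : Unitization ℤ I) * a := by
      rw [← inr_mul, ← inr_mul, hpa]
    have hAU : (a : Unitization ℤ I) * (1 - (a : Unitization ℤ I) - p)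
        = ((1 : Unitization ℤ I) - a - p) * a := by
      calc (a : Unitization ℤ I) * (1 - (a : Unitization ℤ I) - p)
          = (a : Unitization ℤ I) - (a : Unitization ℤ I)*a - (a : Unitization ℤ I)*p := by noncomm_ring
        _ = (a : Unitization ℤ I) - (a : Unitization ℤ I)*a - (p : Unitization ℤ I)*a := by rw [hAP]
        _ = ((1 : Unitization ℤ I) - a - p) * a := by noncomm_ring
    have hPU : (p : Unitization ℤ I) * (1 - (a : Unitization ℤ I) - p)
        = ((1 : Unitization ℤ I) - a - p) * p := by
      calc (p : Unitization ℤ I) * (1 - (a : Unitization ℤ I) - p)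
          = (p : Unitization ℤ I) - (p : Unitization ℤ I)*a - (p : Unitization ℤ I)*p := by noncomm_ring
        _ = (p : Unitization ℤ I) - (a : Unitization ℤ I)*p - (p : Unitization ℤ I)*p := by rw [← hAP]
        _ = ((1 : Unitization ℤ I) - a - p) * p := by noncomm_ring
    have hAH := commute_of_inv (M := Unitization ℤ I) hAU hU1 hU2
    have hPH := commute_of_inv (M := Unitization ℤ I) hPU hU1 hU2
    have hppR : (p : Unitization ℤ I) * p = (p : Unitization ℤ I) := by
      rw [← inr_mul, hp2]
    obtain ⟨f1, f2⟩ := fwd_calc (R := Unitization ℤ I) hAP hAH hPH hppR hU1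
    set b : I := s * p - p with hbdef
    have hbR : ((b : I) : Unitization ℤ I)
        = -((1 - (s : Unitization ℤ I)) * (p : Unitization ℤ I)) := by
      rw [hbdef, inr_sub, inr_mul]; noncomm_ring
    have prop2 : a * (b * b) = b := by
      apply inr_injective (R := ℤ)
      rw [inr_mul, inr_mul, hbR, neg_mul_neg]
      exact f1
    have habp : a * b = p := by
      apply inr_injective (R := ℤ)
      rw [inr_mul, hbR, mul_neg, f2, neg_neg]
    have prop1 : inComm2 a b := by
      intro y hy
      have hpy : p * y = y * p := hpc y hy
      have hYA : (y : Unitization ℤ I) * a = (a : Unitization ℤ I) * y := by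
        rw [← inr_mul, ← inr_mul, hy]
      have hPY : (p : Unitization ℤ I) * y = (y : Unitization ℤ I) * p := by
        rw [← inr_mul, ← inr_mul, hpy]
      have hYU : (y : Unitization ℤ I) * (1 - (a : Unitization ℤ I) - p)
          = ((1 : Unitization ℤ I) - a - p) * y := by
        calc (y : Unitization ℤ I) * (1 - (a : Unitization ℤ I) - p)
            = (y : Unitization ℤ I) - (y : Unitization ℤ I)*a - (y : Unitization ℤ I)*p := by noncomm_ring
          _ = (y : Unitization ℤ I) - (a : Unitization ℤ I)*y - (p : Unitization ℤ I)*y := by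
              rw [hYA, ← hPY]
          _ = ((1 : Unitization ℤ I) - a - p) * y := by noncomm_ring
      have hYH := commute_of_inv (M := Unitization ℤ I) hYU hU1 hU2
      apply inr_injective (R := ℤ)
      rw [inr_mul, inr_mul, hbR, neg_mul, mul_neg, neg_inj]
      calc ((1 : Unitization ℤ I) - s) * p * y
          = ((1 : Unitization ℤ I) - s) * (p * y) := by rw [mul_assoc (G := Unitization ℤ I)]
        _ = ((1 : Unitization ℤ I) - s) * (y * p) := by rw [hPY]
        _ = (((1 : Unitization ℤ I) - s) * y) * p := by rw [mul_assoc (G := Unitization ℤ I)]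
        _ = ((y : Unitization ℤ I) * (1 - (s : Unitization ℤ I))) * p := by rw [hYH]
        _ = (y : Unitization ℤ I) * ((1 - (s : Unitization ℤ I)) * p) := by rw [mul_assoc (G := Unitization ℤ I)]
    have prop3 : inQN (a * a * b - a) := by
      have e : a * a * b - a = -(a - a * p) := by rw [neg_sub, mul_assoc, habp]
      rw [e]
      exact inQN_neg hQN
    refine ⟨b, ⟨prop1, prop2, prop3⟩, ?_⟩
    rintro y ⟨hy1, hy2, hy3⟩
    exact gd_unique hy1 hy2 hy3 prop1 prop2 prop3
  · rintro ⟨b, ⟨h1, h2, h3⟩, -⟩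
    have hba : b * a = a * b := h1 a rfl
    refine ⟨a * b, ?_, ?_, ?_, ?_⟩
    · have k : b * (a * b) = b := by rw [← mul_assoc, hba, mul_assoc, h2]
      rw [mul_assoc, k]
    · intro y hy
      have hby : b * y = y * b := h1 y hy
      rw [mul_assoc, hby, ← mul_assoc, ← hy, mul_assoc]
    · have hqQN : inQN (a - a*a*b) := by
        have := inQN_neg h3; rwa [neg_sub] at this
      obtain ⟨v, hv⟩ := inQN_isUnit hqQN
      have habR : (a : Unitization ℤ I) * b = (b : Unitization ℤ I) * a := by
        rw [← inr_mul, ← inr_mul, hba]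
      have hqR : ((a - a*a*b : I) : Unitization ℤ I)
          = (a : Unitization ℤ I) - (a : Unitization ℤ I)*a*b := by
        rw [inr_sub, inr_mul, inr_mul]
      obtain ⟨hAq, hBq⟩ := bwd_comm (R := Unitization ℤ I) habR
      have hv1 : ((1 : Unitization ℤ I) - ((a : Unitization ℤ I) - (a : Unitization ℤ I)*a*b)) * ↑v⁻¹ = 1 := by
        rw [← hqR, ← hv]; exact v.mul_inv
      have hv2 : (↑v⁻¹ : Unitization ℤ I) * (1 - ((a : Unitization ℤ I) - (a : Unitization ℤ I)*a*b)) = 1 := by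
        rw [← hqR, ← hv]; exact v.inv_mul
      have hAV := commute_of_inv (M := Unitization ℤ I) hAq hv1 hv2
      have hBV := commute_of_inv (M := Unitization ℤ I) hBq hv1 hv2
      have hb2R : (a : Unitization ℤ I) * ((b : Unitization ℤ I) * b) = (b : Unitization ℤ I) := by
        rw [← inr_mul, ← inr_mul, h2]
      obtain ⟨m1, m2⟩ := bwd_main (R := Unitization ℤ I) habR hAV hBV hb2R hv1
      rw [inQ_iff_isUnit]
      have e : ((a + a*b : I) : Unitization ℤ I)
          = (a : Unitization ℤ I) + (a : Unitization ℤ I)*b := by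
        rw [inr_add, inr_mul]
      rw [e]
      exact isUnit_iff_exists.mpr ⟨_, m1, m2⟩
    · have e : a - a * (a * b) = -(a*a*b - a) := by rw [neg_sub, ← mul_assoc]
      rw [e]
      exact inQN_neg h3
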